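/- arXiv:2006.08736 — 2 statements merged into one kernel-verified Lean document; each statement's English description precedes it below -/
import Mathlib

section
/- For every g in the general linear group GL(3, 𝔽₂) of invertible 3×3 matrices over the field with two elements, the number of 1-dimensional linear subspaces W of 𝔽₂³ with g·W = W equals the number of 2-dimensional linear subspaces U of 𝔽₂³ with g·U = U. -/
open Matrix Submodule Module

/-- The action of `GL(3, 𝔽₂)` on linear subspaces of `𝔽₂³` by taking images. -/
def glAct (g : GL (Fin 3) (ZMod 2)) (W : Submodule (ZMod 2) (Fin 3 → ZMod 2)) :
    Submodule (ZMod 2) (Fin 3 → ZMod 2) :=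
  W.map (Matrix.toLin' (g : Matrix (Fin 3) (Fin 3) (ZMod 2)))

namespace FanoAux

abbrev K := ZMod 2
abbrev V := Fin 3 → ZMod 2

lemma zmod2_eq_one {c : K} (h : c ≠ 0) : c = 1 := by revert h; revert c; decide

lemma span_singleton_inj {v w : V} (hv : v ≠ 0) (h : (span K {v} : Submodule K V) = span K {w}) :
    v = w := by
  have : v ∈ (span K {w} : Submodule K V) := h ▸ mem_span_singleton_self v
  obtain ⟨c, hc⟩ := mem_span_singleton.mp this
  have hc0 : c ≠ 0 := by rintro rfl; simp at hc; exact hv hc.symm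
  rw [zmod2_eq_one hc0, one_smul] at hc
  exact hc.symm

/-- The functional `x ↦ w ⬝ᵥ x`. -/
def phi (w : V) : V →ₗ[K] K where
  toFun x := w ⬝ᵥ x
  map_add' x y := dotProduct_add w x y
  map_smul' c x := by simp [dotProduct_smul]

@[simp] lemma phi_apply (w x : V) : phi w x = w ⬝ᵥ x := rfl

lemma phi_single (w : V) (i : Fin 3) : phi w (fun j => if i = j then 1 else 0) = w i := by
  simp [phi, dotProduct, Finset.sum_ite_eq]

lemma phi_eq_iff {w w' : V} : phi w = phi w' ↔ w = w' := by
  constructor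
  · intro h; funext i
    rw [← phi_single w i, ← phi_single w' i, h]
  · rintro rfl; rfl

lemma phi_ne_zero {w : V} (hw : w ≠ 0) : phi w ≠ 0 := by
  intro h
  apply hw
  funext i
  rw [← phi_single w i, h]
  rfl

lemma phi_eq_of_ker_eq {w w' : V} (hw : w ≠ 0)
    (h : LinearMap.ker (phi w) = LinearMap.ker (phi w')) : w = w' := by
  have hne := phi_ne_zero hw
  obtain ⟨u, hu⟩ : ∃ u, phi w u ≠ 0 := by
    by_contra hc
    push_neg at hc
    exact hne (LinearMap.ext fun x => hc x)
  have hu1 : phi w u = 1 := zmod2_eq_one hu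
  have hu' : phi w' u ≠ 0 := by
    intro h0
    rw [← LinearMap.mem_ker, ← h, LinearMap.mem_ker] at h0
    exact hu h0
  have hu'1 : phi w' u = 1 := zmod2_eq_one hu'
  rw [← phi_eq_iff]
  refine LinearMap.ext fun x => ?_
  have hk : x - phi w x • u ∈ LinearMap.ker (phi w) := by
    simp [LinearMap.mem_ker, map_sub, _root_.map_smul, hu1]
  rw [h, LinearMap.mem_ker] at hk
  calc phi w x = phi w x * phi w' u := by rw [hu'1, mul_one]
    _ = phi w' (phi w x • u) := by simp
    _ = phi w' (x - phi w x • u) + phi w' (phi w x • u) := by rw [hk, zero_add]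
    _ = phi w' x := by rw [← map_add, sub_add_cancel]

lemma finrank_V : finrank K V = 3 := Module.finrank_fin_fun K

lemma finrank_ker_phi {w : V} (hw : w ≠ 0) : finrank K (LinearMap.ker (phi w)) = 2 := by
  have h1 := (phi w).finrank_range_add_finrank_ker
  rw [finrank_V] at h1
  have hr : finrank K (LinearMap.range (phi w)) = 1 := by
    rcases eq_bot_or_eq_top (LinearMap.range (phi w)) with h | h
    · exact absurd (LinearMap.range_eq_bot.mp h) (phi_ne_zero hw)
    · rw [h, finrank_top, finrank_self]
  omega

/-- Every 2-dimensional subspace is the kernel of some `phi w`, `w ≠ 0`. -/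
lemma exists_phi (U : Submodule K V) (hU : finrank K U = 2) :
    ∃ w : V, w ≠ 0 ∧ U = LinearMap.ker (phi w) := by
  have hlt : U < ⊤ := by
    rcases lt_or_eq_of_le (le_top : U ≤ ⊤) with h | h
    · exact h
    · exfalso; rw [h, finrank_top, finrank_V] at hU; omega
  obtain ⟨f, hf0, hfb⟩ := U.exists_dual_map_eq_bot_of_lt_top hlt inferInstance
  set w : V := fun i => f (fun j => if i = j then 1 else 0) with hwdef
  have hfw : f = phi w := by
    refine LinearMap.ext fun x => ?_
    rw [LinearMap.pi_apply_eq_sum_univ f x]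
    simp [phi, dotProduct, mul_comm]
    rfl
  have hw0 : w ≠ 0 := by
    intro h0
    apply hf0
    rw [hfw, h0]
    ext x; simp [phi]
  refine ⟨w, hw0, ?_⟩
  have hle : U ≤ LinearMap.ker (phi w) := by
    intro x hx
    have : f x ∈ U.map f := Submodule.mem_map_of_mem hx
    rw [hfb, Submodule.mem_bot] at this
    rw [LinearMap.mem_ker, ← hfw]
    exact this
  exact Submodule.eq_of_le_of_finrank_le hle (by rw [finrank_ker_phi hw0, hU])

lemma dot_transpose (M : Matrix (Fin 3) (Fin 3) K) (u x : V) :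
    (Mᵀ *ᵥ u) ⬝ᵥ x = u ⬝ᵥ (M *ᵥ x) := by
  rw [mulVec_transpose, ← dotProduct_mulVec]

/-- transport along a matrix of the kernel of `phi w`. -/
lemma map_ker_phi (A B : Matrix (Fin 3) (Fin 3) K) (hAB : A * B = 1) (w : V) :
    Submodule.map (Matrix.toLin' A) (LinearMap.ker (phi w)) = LinearMap.ker (phi (Bᵀ *ᵥ w)) := by
  ext x
  simp only [Submodule.mem_map, LinearMap.mem_ker, phi_apply, toLin'_apply]
  constructor
  · rintro ⟨y, hy, rfl⟩
    have hBA : B * A = 1 := by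
      have := mul_eq_one_comm.mp hAB
      exact this
    rw [dot_transpose, mulVec_mulVec, hBA, one_mulVec]
    exact hy
  · intro hx
    refine ⟨B *ᵥ x, ?_, ?_⟩
    · rw [dot_transpose] at hx; exact hx
    · rw [mulVec_mulVec, hAB, one_mulVec]

/-- nonzero-element subtype of a submodule. -/
def eNonzero (p : Submodule K V) : {v : V // v ≠ 0 ∧ v ∈ p} ≃ {x : p // x ≠ 0} where
  toFun v := ⟨⟨v.1, v.2.2⟩, fun h => v.2.1 (congrArg Subtype.val h)⟩
  invFun x := ⟨x.1.1, fun h => x.2 (Subtype.ext h), x.1.2⟩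
  left_inv _ := rfl
  right_inv _ := rfl

end FanoAux

open FanoAux

/-- For every `g ∈ GL(3, 𝔽₂)`, the number of `g`-invariant 1-dimensional subspaces of
`𝔽₂³` (points of the Fano plane) equals the number of `g`-invariant 2-dimensional
subspaces (lines of the Fano plane). -/
theorem card_fixed_points_eq_card_fixed_lines (g : GL (Fin 3) (ZMod 2)) :
    Nat.card {W : Submodule (ZMod 2) (Fin 3 → ZMod 2) //
        Module.finrank (ZMod 2) W = 1 ∧ glAct g W = W} =
      Nat.card {U : Submodule (ZMod 2) (Fin 3 → ZMod 2) //
        Module.finrank (ZMod 2) U = 2 ∧ glAct g U = U} := by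
  classical
  set A : Matrix (Fin 3) (Fin 3) K := (g : Matrix (Fin 3) (Fin 3) (ZMod 2)) with hA
  set B : Matrix (Fin 3) (Fin 3) K := ((g⁻¹ : GL (Fin 3) (ZMod 2)) : Matrix (Fin 3) (Fin 3) (ZMod 2)) with hB
  have hAB : A * B = 1 := by
    rw [hA, hB]
    exact_mod_cast g.mul_inv
  have hBA : B * A = 1 := mul_eq_one_comm.mp hAB
  -- invertibility consequences
  have hAinj : ∀ v : V, A *ᵥ v = 0 → v = 0 := by
    intro v hv
    have := congrArg (fun x => B *ᵥ x) hv
    simpa [mulVec_mulVec, hBA, one_mulVec] using this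
  have hATinj : ∀ v : V, Aᵀ *ᵥ v = 0 → v = 0 := by
    intro v hv
    have := congrArg (fun x => Bᵀ *ᵥ x) hv
    simpa [mulVec_mulVec, ← transpose_mul, hAB, one_mulVec] using this
  -- Step 1: fixed 1-dim subspaces ≃ nonzero fixed vectors
  have key1 : Nat.card {W : Submodule K V // finrank K W = 1 ∧ glAct g W = W}
      = Nat.card {v : V // v ≠ 0 ∧ A *ᵥ v = v} := by
    refine (Nat.card_congr (Equiv.ofBijective
      (fun v : {v : V // v ≠ 0 ∧ A *ᵥ v = v} =>
        (⟨span K {v.1}, finrank_span_singleton v.2.1, by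
          rw [glAct, Submodule.map_span, Set.image_singleton, toLin'_apply, ← hA, v.2.2]⟩ :
          {W : Submodule K V // finrank K W = 1 ∧ glAct g W = W})) ⟨?_, ?_⟩)).symm
    · rintro ⟨v, hv⟩ ⟨w, hw⟩ h
      exact Subtype.ext (span_singleton_inj hv.1 (congrArg Subtype.val h))
    · rintro ⟨W, h1, h2⟩
      have hWbot : W ≠ ⊥ := by
        intro h0
        rw [h0, finrank_bot] at h1
        omega
      obtain ⟨v, hvW, hv0⟩ := Submodule.exists_mem_ne_zero_of_ne_bot hWbot
      have hWspan : W = span K {v} := by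
        refine (Submodule.eq_of_le_of_finrank_le ?_ ?_).symm
        · rwa [span_le, Set.singleton_subset_iff]
        · rw [h1, finrank_span_singleton hv0]
      have hAv : A *ᵥ v ∈ W := by
        have : A *ᵥ v ∈ glAct g W := ⟨v, hvW, toLin'_apply _ v⟩
        rwa [h2] at this
      have hAv0 : A *ᵥ v ≠ 0 := fun h0 => hv0 (hAinj v h0)
      rw [hWspan, mem_span_singleton] at hAv
      obtain ⟨c, hc⟩ := hAv
      have hc0 : c ≠ 0 := by
        rintro rfl
        rw [zero_smul] at hc
        exact hAv0 hc.symm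
      rw [zmod2_eq_one hc0, one_smul] at hc
      exact ⟨⟨v, hv0, hc.symm⟩, Subtype.ext hWspan.symm⟩
  -- Step 2: fixed 2-dim subspaces ≃ nonzero fixed vectors of Aᵀ
  have hBT : ∀ w : V, Aᵀ *ᵥ w = w → Bᵀ *ᵥ w = w := by
    intro w hw
    conv_lhs => rw [← hw]
    rw [mulVec_mulVec, ← transpose_mul, hAB, transpose_one, one_mulVec]
  have key2 : Nat.card {U : Submodule K V // finrank K U = 2 ∧ glAct g U = U}
      = Nat.card {w : V // w ≠ 0 ∧ Aᵀ *ᵥ w = w} := by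
    refine (Nat.card_congr (Equiv.ofBijective
      (fun w : {w : V // w ≠ 0 ∧ Aᵀ *ᵥ w = w} =>
        (⟨LinearMap.ker (phi w.1), finrank_ker_phi w.2.1, by
          rw [glAct, ← hA, map_ker_phi A B hAB, hBT w.1 w.2.2]⟩ :
          {U : Submodule K V // finrank K U = 2 ∧ glAct g U = U})) ⟨?_, ?_⟩)).symm
    · rintro ⟨w, hw⟩ ⟨w', hw'⟩ h
      exact Subtype.ext (phi_eq_of_ker_eq hw.1 (congrArg Subtype.val h))
    · rintro ⟨U, h1, h2⟩
      obtain ⟨w, hw0, rfl⟩ := exists_phi U h1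
      have h2' : LinearMap.ker (phi (Bᵀ *ᵥ w)) = LinearMap.ker (phi w) := by
        rw [← map_ker_phi A B hAB]
        exact h2
      have hBw0 : Bᵀ *ᵥ w ≠ 0 := by
        intro h0
        apply hw0
        have := congrArg (fun x => Aᵀ *ᵥ x) h0
        simpa [mulVec_mulVec, ← transpose_mul, hBA, one_mulVec] using this
      have hBw : Bᵀ *ᵥ w = w := phi_eq_of_ker_eq hBw0 h2'
      have hAw : Aᵀ *ᵥ w = w := by
        conv_lhs => rw [← hBw]
        rw [mulVec_mulVec, ← transpose_mul, hBA, transpose_one, one_mulVec]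
      exact ⟨⟨w, hw0, hAw⟩, rfl⟩
  -- Step 3: the two vector counts agree (rank of a matrix equals rank of transpose)
  rw [key1, key2]
  set C : Matrix (Fin 3) (Fin 3) K := A - 1 with hC
  have hmemC : ∀ v : V, (A *ᵥ v = v) ↔ v ∈ LinearMap.ker C.mulVecLin := by
    intro v
    rw [LinearMap.mem_ker, mulVecLin_apply, hC, sub_mulVec, one_mulVec, sub_eq_zero]
  have hmemCT : ∀ v : V, (Aᵀ *ᵥ v = v) ↔ v ∈ LinearMap.ker (Cᵀ).mulVecLin := by
    intro v
    rw [LinearMap.mem_ker, mulVecLin_apply, hC, transpose_sub, transpose_one, sub_mulVec,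
      one_mulVec, sub_eq_zero]
  have hrank : finrank K (LinearMap.ker C.mulVecLin) = finrank K (LinearMap.ker (Cᵀ).mulVecLin) := by
    have r1 := C.mulVecLin.finrank_range_add_finrank_ker
    have r2 := (Cᵀ).mulVecLin.finrank_range_add_finrank_ker
    rw [finrank_V] at r1 r2
    have hr : finrank K (LinearMap.range (Cᵀ).mulVecLin) = finrank K (LinearMap.range C.mulVecLin) :=
      C.rank_transpose
    omega
  have E := LinearEquiv.ofFinrankEq (LinearMap.ker C.mulVecLin) (LinearMap.ker (Cᵀ).mulVecLin)
    hrank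
  refine Nat.card_congr ?_
  calc {v : V // v ≠ 0 ∧ A *ᵥ v = v}
      ≃ {v : V // v ≠ 0 ∧ v ∈ LinearMap.ker C.mulVecLin} :=
        Equiv.subtypeEquivRight (fun v => and_congr_right fun _ => hmemC v)
    _ ≃ {x : LinearMap.ker C.mulVecLin // x ≠ 0} := eNonzero _
    _ ≃ {y : LinearMap.ker (Cᵀ).mulVecLin // y ≠ 0} :=
        E.toEquiv.subtypeEquiv (fun x => by
          simp [LinearEquiv.map_eq_zero_iff])
    _ ≃ {w : V // w ≠ 0 ∧ w ∈ LinearMap.ker (Cᵀ).mulVecLin} := (eNonzero _).symm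
    _ ≃ {w : V // w ≠ 0 ∧ Aᵀ *ᵥ w = w} :=
        Equiv.subtypeEquivRight (fun w => and_congr_right fun _ => (hmemCT w).symm)
end

section
/- Let G = GL(3, 𝔽₂) act on the set X of 1-dimensional linear subspaces of 𝔽₂³ and on the set Y of 2-dimensional linear subspaces of 𝔽₂³, in each case by taking images under the linear map. Then the induced linear permutation representations of G on ℂ^X and ℂ^Y are isomorphic as complex representations of G. -/
abbrev V2 : Type := Fin 3 → ZMod 2

/-- An element of `GL(3, 𝔽₂)` as a linear automorphism of `𝔽₂³`. -/
noncomputable def glLinearEquiv (g : GL (Fin 3) (ZMod 2)) : V2 ≃ₗ[ZMod 2] V2 :=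
  LinearMap.GeneralLinearGroup.generalLinearEquiv (ZMod 2) V2
    (Matrix.GeneralLinearGroup.toLin g)

lemma glLinearEquiv_one (x : V2) : glLinearEquiv 1 x = x := by
  simp [glLinearEquiv]

lemma glLinearEquiv_mul (g h : GL (Fin 3) (ZMod 2)) (x : V2) :
    glLinearEquiv (g * h) x = glLinearEquiv g (glLinearEquiv h x) := by
  have : glLinearEquiv (g * h) = glLinearEquiv g * glLinearEquiv h := by
    simp [glLinearEquiv, map_mul]
  rw [this]
  rfl

/-- The action of `GL(3, 𝔽₂)` on the set of all linear subspaces of `𝔽₂³`,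
by taking images under the linear map. -/
noncomputable def subAct : GL (Fin 3) (ZMod 2) →* Equiv.Perm (Submodule (ZMod 2) V2) where
  toFun g := (Submodule.orderIsoMapComap (glLinearEquiv g)).toEquiv
  map_one' := by
    ext W
    have h1 : ∀ y, (glLinearEquiv 1).symm y = y :=
      fun y => (LinearEquiv.symm_apply_eq _).2 (glLinearEquiv_one y).symm
    simp [Submodule.orderIsoMapComap, h1]
  map_mul' g h := by
    ext W
    have h2 : ∀ y, (glLinearEquiv (g * h)).symm y =
        (glLinearEquiv h).symm ((glLinearEquiv g).symm y) :=
      fun y => (LinearEquiv.symm_apply_eq _).2 (by rw [glLinearEquiv_mul]; simp)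
    simp [Submodule.orderIsoMapComap, h2]

lemma subAct_finrank (g : GL (Fin 3) (ZMod 2)) (W : Submodule (ZMod 2) V2) :
    Module.finrank (ZMod 2) (subAct g W) = Module.finrank (ZMod 2) W := by
  have h : subAct g W = W.map ((glLinearEquiv g) : V2 →ₗ[ZMod 2] V2) := by
    ext x
    simp only [subAct, Submodule.orderIsoMapComap, MonoidHom.coe_mk, OneHom.coe_mk,
      RelIso.coe_fn_toEquiv, Submodule.mem_map, LinearEquiv.coe_coe]
    rfl
  rw [h, LinearEquiv.finrank_map_eq]

/-- The action of `GL(3, 𝔽₂)` on the set of `r`-dimensional linear subspaces of `𝔽₂³`,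
by taking images under the linear map. -/
noncomputable def fanoRep (r : ℕ) :
    GL (Fin 3) (ZMod 2) →*
      Equiv.Perm {W : Submodule (ZMod 2) V2 // Module.finrank (ZMod 2) W = r} where
  toFun g := (subAct g).subtypePerm (fun W => by rw [subAct_finrank])
  map_one' := by
    ext W
    simp [Equiv.Perm.subtypePerm_apply]
  map_mul' g h := by
    ext W
    simp [Equiv.Perm.subtypePerm_apply]
    exact Iff.rfl

/-- The linear permutation representation of `G` on `ℂ^X` induced by a permutation
action `ρ : G → Perm X`: each `g` permutes the standard basis vectors according to `ρ g`. -/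
noncomputable def permRep {G X : Type*} [Group G] (ρ : G →* Equiv.Perm X) :
    Representation ℂ G (X → ℂ) where
  toFun g := LinearMap.funLeft ℂ ℂ (⇑((ρ g)⁻¹))
  map_one' := by ext v x; simp
  map_mul' g h := by ext v x; simp [mul_inv_rev]


open Matrix Finset in
section

namespace Fano

abbrev P := {v : V2 // v ≠ 0}
abbrev X1 := {W : Submodule (ZMod 2) V2 // Module.finrank (ZMod 2) W = 1}
abbrev Y2 := {U : Submodule (ZMod 2) V2 // Module.finrank (ZMod 2) U = 2}

noncomputable instance : Fintype X1 := Fintype.ofFinite _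
noncomputable instance : Fintype Y2 := Fintype.ofFinite _

def dotMap (w : V2) : V2 →ₗ[ZMod 2] ZMod 2 where
  toFun x := w ⬝ᵥ x
  map_add' x y := dotProduct_add w x y
  map_smul' c x := by simp [dotProduct_smul, smul_eq_mul]

lemma dot_ext : ∀ w w' : V2, w ≠ 0 → w' ≠ 0 →
    (∀ x : V2, w ⬝ᵥ x = 0 ↔ w' ⬝ᵥ x = 0) → w = w' := by decide

lemma exists_dot_ne : ∀ w : V2, w ≠ 0 → ∃ x : V2, w ⬝ᵥ x ≠ 0 := by decide

noncomputable def pt : P ≃ X1 := Equiv.ofBijective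
    (fun v => ⟨Submodule.span (ZMod 2) {v.1}, finrank_span_singleton v.2⟩)
    (by
      constructor
      · rintro ⟨v, hv⟩ ⟨v', hv'⟩ h
        simp only [Subtype.mk.injEq] at h ⊢
        have : v ∈ Submodule.span (ZMod 2) {v'} := h ▸ Submodule.mem_span_singleton_self v
        obtain ⟨c, rfl⟩ := Submodule.mem_span_singleton.mp this
        fin_cases c
        · exact (hv (zero_smul (ZMod 2) v')).elim
        · exact one_smul (ZMod 2) v'
      · rintro ⟨W, hW⟩
        have : W ≠ ⊥ := by
          intro h
          rw [h, finrank_bot] at hW; exact one_ne_zero hW.symm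
        obtain ⟨v, hvW, hv⟩ := Submodule.exists_mem_ne_zero_of_ne_bot this
        refine ⟨⟨v, hv⟩, ?_⟩
        apply Subtype.ext
        exact Submodule.eq_of_le_of_finrank_eq
          ((Submodule.span_singleton_le_iff_mem v W).mpr hvW)
          (by rw [hW, finrank_span_singleton hv]))

lemma pt_apply (v : P) : (pt v : Submodule (ZMod 2) V2) = Submodule.span (ZMod 2) {v.1} := rfl

lemma dotMap_ne_zero {w : V2} (hw : w ≠ 0) : dotMap w ≠ 0 := by
  obtain ⟨x, hx⟩ := exists_dot_ne w hw
  intro h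
  exact hx (LinearMap.congr_fun h x)

lemma finrank_ker_dotMap {w : V2} (hw : w ≠ 0) :
    Module.finrank (ZMod 2) (LinearMap.ker (dotMap w)) = 2 := by
  have h := LinearMap.finrank_range_add_finrank_ker (dotMap w)
  rw [Module.finrank_fin_fun] at h
  have hrange : Module.finrank (ZMod 2) (LinearMap.range (dotMap w)) = 1 := by
    have hle : Module.finrank (ZMod 2) (LinearMap.range (dotMap w)) ≤ 1 := by
      simpa using Submodule.finrank_le (LinearMap.range (dotMap w))
    have hne : LinearMap.range (dotMap w) ≠ ⊥ := by
      rw [Ne, LinearMap.range_eq_bot]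
      exact dotMap_ne_zero hw
    have : Module.finrank (ZMod 2) (LinearMap.range (dotMap w)) ≠ 0 := by
      rw [Ne, Submodule.finrank_eq_zero]
      exact hne
    omega
  omega

noncomputable def ln : P ≃ Y2 := Equiv.ofBijective
    (fun w => ⟨LinearMap.ker (dotMap w.1), finrank_ker_dotMap w.2⟩)
    (by
      constructor
      · rintro ⟨w, hw⟩ ⟨w', hw'⟩ h
        simp only [Subtype.mk.injEq] at h ⊢
        refine dot_ext w w' hw hw' (fun x => ?_)
        constructor
        · intro hx
          have : x ∈ LinearMap.ker (dotMap w') := h ▸ hx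
          exact this
        · intro hx
          have : x ∈ LinearMap.ker (dotMap w) := h.symm ▸ hx
          exact this
      · rintro ⟨U, hU⟩
        have hq : Module.finrank (ZMod 2) (V2 ⧸ U) = 1 := by
          have h := Submodule.finrank_quotient_add_finrank U
          rw [Module.finrank_fin_fun, hU] at h
          omega
        obtain ⟨ε⟩ := FiniteDimensional.nonempty_linearEquiv_of_finrank_eq
          (hq.trans (Module.finrank_self (ZMod 2)).symm)
        set φ : V2 →ₗ[ZMod 2] ZMod 2 := ε.toLinearMap ∘ₗ U.mkQ with hφ
        have hker : LinearMap.ker φ = U := by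
          rw [hφ, LinearMap.ker_comp, LinearMap.ker_eq_bot.mpr ε.injective,
            Submodule.comap_bot, Submodule.ker_mkQ]
        set w : V2 := fun i => φ (Pi.single i 1) with hwdef
        have hdot : dotMap w = φ := by
          refine LinearMap.ext fun x => ?_
          rw [LinearMap.pi_apply_eq_sum_univ φ x]
          simp only [dotMap, LinearMap.coe_mk, AddHom.coe_mk, dotProduct, hwdef,
            smul_eq_mul]
          refine Finset.sum_congr rfl (fun i _ => ?_)
          rw [mul_comm]
          congr 1
          exact congrArg φ (funext fun j => by simp [Pi.single_apply, eq_comm])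
        have hw : w ≠ 0 := by
          intro h0
          have : φ = 0 := by rw [← hdot, h0]; ext x; simp [dotMap]
          have : U = ⊤ := by rw [← hker, this, LinearMap.ker_zero]
          rw [this, finrank_top, Module.finrank_fin_fun] at hU
          omega
        exact ⟨⟨w, hw⟩, Subtype.ext (by simpa using hdot ▸ hker)⟩)

lemma ln_apply (w : P) : (ln w : Submodule (ZMod 2) V2) = LinearMap.ker (dotMap w.1) := rfl

lemma incidence (v w : P) : (pt v : Submodule (ZMod 2) V2) ≤ (ln w : Submodule (ZMod 2) V2)
    ↔ w.1 ⬝ᵥ v.1 = 0 := by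
  rw [pt_apply, ln_apply, Submodule.span_singleton_le_iff_mem, LinearMap.mem_ker]
  rfl

open scoped Classical

lemma count : ∀ v₀ v : P,
    (Finset.univ.filter (fun w : P => w.1 ⬝ᵥ v₀.1 = 0 ∧ w.1 ⬝ᵥ v.1 = 0)).card
      = if v = v₀ then 3 else 1 := by decide

lemma card_P : Fintype.card P = 7 := by decide

lemma inj_aux (u : P → ℂ)
    (h : ∀ w : P, ∑ v : P, (if w.1 ⬝ᵥ v.1 = 0 then u v else 0) = 0) : u = 0 := by
  set S : ℂ := ∑ v : P, u v with hS
  have key : ∀ v₀ : P, 2 * u v₀ + S = 0 := by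
    intro v₀
    have hT0 : ∑ w : P, ∑ v : P,
        (if w.1 ⬝ᵥ v₀.1 = 0 ∧ w.1 ⬝ᵥ v.1 = 0 then u v else 0) = 0 := by
      refine Finset.sum_eq_zero fun w _ => ?_
      by_cases hw : w.1 ⬝ᵥ v₀.1 = 0
      · calc ∑ v : P, (if w.1 ⬝ᵥ v₀.1 = 0 ∧ w.1 ⬝ᵥ v.1 = 0 then u v else 0)
            = ∑ v : P, (if w.1 ⬝ᵥ v.1 = 0 then u v else 0) :=
              Finset.sum_congr rfl fun v _ => if_congr (and_iff_right hw) rfl rfl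
          _ = 0 := h w
      · exact Finset.sum_eq_zero fun v _ => if_neg (fun hab => hw hab.1)
    rw [Finset.sum_comm] at hT0
    have hT1 : ∀ v : P, ∑ w : P,
        (if w.1 ⬝ᵥ v₀.1 = 0 ∧ w.1 ⬝ᵥ v.1 = 0 then u v else 0)
        = (if v = v₀ then (3 : ℂ) else 1) * u v := by
      intro v
      rw [← Finset.sum_filter, Finset.sum_const, count v₀ v, nsmul_eq_mul]
      by_cases hv : v = v₀ <;> simp [hv]
    rw [Finset.sum_congr rfl (fun v _ => hT1 v)] at hT0
    have hsplit : ∀ v : P, (if v = v₀ then (3 : ℂ) else 1) * u v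
        = (if v = v₀ then (2 : ℂ) * u v else 0) + u v := by
      intro v
      by_cases hv : v = v₀ <;> simp [hv] <;> ring
    rw [Finset.sum_congr rfl (fun v _ => hsplit v), Finset.sum_add_distrib,
      Finset.sum_ite_eq' Finset.univ v₀ (fun v => (2 : ℂ) * u v)] at hT0
    simpa using hT0
  have hSum : (9 : ℂ) * S = 0 := by
    have := Finset.sum_congr rfl (fun v₀ (_ : v₀ ∈ Finset.univ) => (key v₀))
    rw [Finset.sum_add_distrib, ← Finset.mul_sum, ← hS, Finset.sum_const,
      Finset.card_univ, card_P, Finset.sum_const, Finset.card_univ, card_P] at this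
    simp only [Finset.sum_const, smul_zero] at this
    push_cast at this
    linear_combination this
  have hS0 : S = 0 := by
    have h9 : (9 : ℂ) ≠ 0 := by norm_num
    exact (mul_eq_zero.mp hSum).resolve_left h9
  funext v₀
  have := key v₀
  rw [hS0, add_zero] at this
  have h2 : (2 : ℂ) ≠ 0 := by norm_num
  simpa using (mul_eq_zero.mp this).resolve_left h2

noncomputable def inc : (X1 → ℂ) →ₗ[ℂ] (Y2 → ℂ) where
  toFun u := fun U => ∑ W : X1, if (W : Submodule (ZMod 2) V2) ≤ (U : Submodule (ZMod 2) V2) then u W else 0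
  map_add' u u' := by
    funext U
    simp only [Pi.add_apply, ← Finset.sum_add_distrib]
    exact Finset.sum_congr rfl fun W _ => by
      by_cases h : (W : Submodule (ZMod 2) V2) ≤ (U : Submodule (ZMod 2) V2) <;> simp [h]
  map_smul' c u := by
    funext U
    simp only [RingHom.id_apply, Pi.smul_apply, smul_eq_mul, Finset.mul_sum]
    exact Finset.sum_congr rfl fun W _ => by
      by_cases h : (W : Submodule (ZMod 2) V2) ≤ (U : Submodule (ZMod 2) V2) <;> simp [h]

lemma subAct_inv_apply (g : GL (Fin 3) (ZMod 2)) (C : Submodule (ZMod 2) V2) :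
    subAct g⁻¹ (subAct g C) = C := by
  rw [← Equiv.Perm.mul_apply, ← _root_.map_mul, inv_mul_cancel, _root_.map_one, Equiv.Perm.one_apply]

lemma subAct_mono (g : GL (Fin 3) (ZMod 2)) {A B : Submodule (ZMod 2) V2} (h : A ≤ B) :
    subAct g A ≤ subAct g B :=
  (Submodule.orderIsoMapComap (glLinearEquiv g)).monotone h

lemma subAct_le_iff (g : GL (Fin 3) (ZMod 2)) (A B : Submodule (ZMod 2) V2) :
    subAct g A ≤ B ↔ A ≤ subAct g⁻¹ B := by
  constructor
  · intro h
    have := subAct_mono g⁻¹ h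
    rwa [subAct_inv_apply] at this
  · intro h
    have := subAct_mono g h
    rwa [show subAct g (subAct g⁻¹ B) = B from by
      rw [← Equiv.Perm.mul_apply, ← _root_.map_mul, mul_inv_cancel, _root_.map_one,
        Equiv.Perm.one_apply]] at this

lemma fanoRep_coe (r : ℕ) (g : GL (Fin 3) (ZMod 2))
    (W : {W : Submodule (ZMod 2) V2 // Module.finrank (ZMod 2) W = r}) :
    ((fanoRep r g W : {W : Submodule (ZMod 2) V2 // Module.finrank (ZMod 2) W = r}) :
      Submodule (ZMod 2) V2) = subAct g (W : Submodule (ZMod 2) V2) := rfl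

lemma inc_equiv (g : GL (Fin 3) (ZMod 2)) (u : X1 → ℂ) :
    inc (permRep (fanoRep 1) g u) = permRep (fanoRep 2) g (inc u) := by
  funext U
  have hperm : ∀ {r : ℕ} (ρ : GL (Fin 3) (ZMod 2) →* Equiv.Perm
        {W : Submodule (ZMod 2) V2 // Module.finrank (ZMod 2) W = r})
      (v : {W : Submodule (ZMod 2) V2 // Module.finrank (ZMod 2) W = r} → ℂ) (A),
      permRep ρ g v A = v (ρ g⁻¹ A) := by
    intro r ρ v A
    simp [permRep, LinearMap.funLeft]
  show (∑ W : X1, if (W : Submodule (ZMod 2) V2) ≤ (U : Submodule (ZMod 2) V2)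
      then (permRep (fanoRep 1) g u) W else 0) = permRep (fanoRep 2) g (inc u) U
  rw [hperm (fanoRep 2) (inc u) U]
  show _ = ∑ W : X1, if (W : Submodule (ZMod 2) V2) ≤ ((fanoRep 2 g⁻¹ U : Y2) :
      Submodule (ZMod 2) V2) then u W else 0
  rw [Finset.sum_congr rfl (fun W (_ : W ∈ Finset.univ) => by
    rw [hperm (fanoRep 1) u W])]
  refine Fintype.sum_bijective (⇑(fanoRep 1 g⁻¹)) (Equiv.bijective _) _ _ fun W => ?_
  have h1 : fanoRep 1 g (fanoRep 1 g⁻¹ W) = W := by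
    rw [← Equiv.Perm.mul_apply, ← _root_.map_mul, mul_inv_cancel, _root_.map_one, Equiv.Perm.one_apply]
  refine if_congr ?_ rfl rfl
  conv_lhs => rw [← h1]
  rw [fanoRep_coe, fanoRep_coe]
  exact subAct_le_iff g _ _

lemma inc_injective : Function.Injective inc := by
  have main : ∀ u : X1 → ℂ, inc u = 0 → u = 0 := by
    intro u hu
    have h' : ∀ w : P, ∑ v : P, (if w.1 ⬝ᵥ v.1 = 0 then u (pt v) else 0) = 0 := by
      intro w
      have h0 : inc u (ln w) = 0 := by rw [hu]; rfl
      rw [show inc u (ln w) = ∑ W : X1, if (W : Submodule (ZMod 2) V2)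
          ≤ ((ln w : Y2) : Submodule (ZMod 2) V2) then u W else 0 from rfl] at h0
      rw [← Equiv.sum_comp pt (fun W : X1 => if (W : Submodule (ZMod 2) V2)
          ≤ ((ln w : Y2) : Submodule (ZMod 2) V2) then u W else 0)] at h0
      calc ∑ v : P, (if w.1 ⬝ᵥ v.1 = 0 then u (pt v) else 0)
          = ∑ v : P, (if ((pt v : X1) : Submodule (ZMod 2) V2)
              ≤ ((ln w : Y2) : Submodule (ZMod 2) V2) then u (pt v) else 0) :=
            Finset.sum_congr rfl fun v _ => if_congr (incidence v w).symm rfl rfl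
        _ = 0 := h0
    have hz := inj_aux (fun v => u (pt v)) h'
    funext W
    obtain ⟨v, rfl⟩ := pt.surjective W
    exact congrFun hz v
  intro u u' h
  have h0 : inc (u - u') = 0 := by rw [map_sub, h, sub_self]
  have := main _ h0
  exact sub_eq_zero.mp this

lemma dim_eq : Module.finrank ℂ (X1 → ℂ) = Module.finrank ℂ (Y2 → ℂ) := by
  rw [Module.finrank_fintype_fun_eq_card, Module.finrank_fintype_fun_eq_card,
    Fintype.card_congr (pt.symm.trans ln)]

end Fano

end

/-- The linear permutation representations of `GL(3, 𝔽₂)` on `ℂ^X` and `ℂ^Y`, where `X` is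
the set of 1-dimensional subspaces (points of the Fano plane) and `Y` is the set of
2-dimensional subspaces (lines of the Fano plane), are isomorphic as complex
representations. -/
theorem fano_points_lines_isospectral :
    ∃ e : ({W : Submodule (ZMod 2) V2 // Module.finrank (ZMod 2) W = 1} → ℂ) ≃ₗ[ℂ]
          ({U : Submodule (ZMod 2) V2 // Module.finrank (ZMod 2) U = 2} → ℂ),
      ∀ (g : GL (Fin 3) (ZMod 2)) (v : _),
        e (permRep (fanoRep 1) g v) = permRep (fanoRep 2) g (e v) := by
  refine ⟨Fano.inc.linearEquivOfInjective Fano.inc_injective Fano.dim_eq, fun g v => ?_⟩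
  rw [LinearMap.linearEquivOfInjective_apply, LinearMap.linearEquivOfInjective_apply,
    Fano.inc_equiv]
end
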